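/- Let G be a bipartite graph with parts V₁ ∪ {s₁} and V₂ ∪ {s₂}, where s₂ is adjacent to every vertex of V₁ and to s₁, s₁ is adjacent to every vertex of V₂ and to s₂, and the adjacencies between V₁ and V₂ are given by an arbitrary edge set E ⊆ V₁ × V₂. Fix any vertex k₀ ∈ V₁. Then applying the Pauli-X measurement pattern at s₂ with special neighbor k₀ (i.e., the graph operation G ↦ τ_{k₀}( τ_{s₂}( τ_{k₀}(G) ) − s₂ )), followed by the Pauli-X measurement pattern at s₁ with the same special neighbor k₀, yields the bipartite complement graph: the graph on vertex set V₁ ∪ V₂ in which vᵢ ∈ V₁ and vⱼ ∈ V₂ are adjacent iff (vᵢ, vⱼ) ∉ E, and no two vertices within the same part are adjacent. -/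

import Mathlib

set_option maxHeartbeats 1000000


/-- Local complementation of `G` at vertex `v`: adjacency between distinct
vertices `x, y` is toggled iff both are neighbors of `v`. -/
def localComp {V : Type*} (G : SimpleGraph V) (v : V) : SimpleGraph V where
  Adj x y := x ≠ y ∧ ¬(G.Adj x y ↔ (G.Adj v x ∧ G.Adj v y))
  symm := by
    constructor
    intro x y ⟨hxy, h⟩
    refine ⟨hxy.symm, ?_⟩
    rwa [G.adj_comm y x, and_comm]
  loopless := by
    constructor
    intro x ⟨h, _⟩
    exact h rfl

/-- Deletion of vertex `w`: remove all edges incident to `w`. -/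
def deleteVert {V : Type*} (G : SimpleGraph V) (w : V) : SimpleGraph V where
  Adj x y := G.Adj x y ∧ x ≠ w ∧ y ≠ w
  symm := ⟨fun x y ⟨h, hx, hy⟩ => ⟨h.symm, hy, hx⟩⟩
  loopless := ⟨fun x ⟨h, _, _⟩ => G.loopless.irrefl x h⟩

/-- Graph operation of Pauli-X measurement at `a` with special neighbor `k0`:
`τ_{k0}( τ_a( τ_{k0}(G) ) − a )`. -/
def xMeas {V : Type*} (G : SimpleGraph V) (a k0 : V) : SimpleGraph V :=
  localComp (deleteVert (localComp (localComp G k0) a) a) k0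

lemma classify {V : Type*} (V1 V2 : Set V) (s1 s2 k0 : V)
    (hn12 : ∀ z, z ∈ V1 → z ∉ V2) (hk0 : k0 ∈ V1)
    (hs1n1 : s1 ∉ V1) (hs1n2 : s1 ∉ V2) (hs2n1 : s2 ∉ V1) (hs2n2 : s2 ∉ V2)
    (x : V) :
    x = k0 ∨ x = s1 ∨ x = s2 ∨
    (x ∈ V1 ∧ x ∉ V2 ∧ x ≠ k0 ∧ k0 ≠ x ∧ x ≠ s1 ∧ s1 ≠ x ∧ x ≠ s2 ∧ s2 ≠ x) ∨
    (x ∈ V2 ∧ x ∉ V1 ∧ x ≠ k0 ∧ k0 ≠ x ∧ x ≠ s1 ∧ s1 ≠ x ∧ x ≠ s2 ∧ s2 ≠ x) ∨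
    (x ∉ V1 ∧ x ∉ V2 ∧ x ≠ s1 ∧ s1 ≠ x ∧ x ≠ s2 ∧ s2 ≠ x ∧ x ≠ k0 ∧ k0 ≠ x) := by
  by_cases hk : x = k0
  · exact Or.inl hk
  by_cases h1 : x = s1
  · exact Or.inr (Or.inl h1)
  by_cases h2 : x = s2
  · exact Or.inr (Or.inr (Or.inl h2))
  by_cases m1 : x ∈ V1
  · exact Or.inr (Or.inr (Or.inr (Or.inl ⟨m1, hn12 x m1, hk, fun h => hk h.symm,
      h1, fun h => h1 h.symm, h2, fun h => h2 h.symm⟩)))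
  by_cases m2 : x ∈ V2
  · exact Or.inr (Or.inr (Or.inr (Or.inr (Or.inl ⟨m2, m1, hk, fun h => hk h.symm,
      h1, fun h => h1 h.symm, h2, fun h => h2 h.symm⟩))))
  · exact Or.inr (Or.inr (Or.inr (Or.inr (Or.inr ⟨m1, m2, h1, fun h => h1 h.symm,
      h2, fun h => h2 h.symm, hk, fun h => hk h.symm⟩))))

lemma stepA {V : Type*}
    (V1 V2 : Set V) (s1 s2 : V) (E : V → V → Prop) (G : SimpleGraph V)
    (hn12 : ∀ z, z ∈ V1 → z ∉ V2)
    (hs1n1 : s1 ∉ V1) (hs1n2 : s1 ∉ V2) (hs2n1 : s2 ∉ V1) (hs2n2 : s2 ∉ V2)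
    (hs12 : s1 ≠ s2)
    (hG : ∀ x y, G.Adj x y ↔
      (x ∈ V1 ∧ y ∈ V2 ∧ E x y) ∨ (y ∈ V1 ∧ x ∈ V2 ∧ E y x) ∨
      (x = s2 ∧ y ∈ V1) ∨ (y = s2 ∧ x ∈ V1) ∨
      (x = s1 ∧ y ∈ V2) ∨ (y = s1 ∧ x ∈ V2) ∨
      (x = s1 ∧ y = s2) ∨ (x = s2 ∧ y = s1))
    (k0 : V) (hk0 : k0 ∈ V1) :
    ∀ x y, (xMeas G s2 k0).Adj x y ↔
      (x = k0 ∧ y ∈ V1 ∧ y ≠ k0) ∨ (y = k0 ∧ x ∈ V1 ∧ x ≠ k0) ∨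
      (x = k0 ∧ y = s1) ∨ (y = k0 ∧ x = s1) ∨
      (x ∈ V1 ∧ y ∈ V2 ∧ ¬(E x y ↔ E k0 y)) ∨
      (y ∈ V1 ∧ x ∈ V2 ∧ ¬(E y x ↔ E k0 x)) ∨
      (x = s1 ∧ y ∈ V2 ∧ ¬ E k0 y) ∨ (y = s1 ∧ x ∈ V2 ∧ ¬ E k0 x) := by
  have hk2 : k0 ∉ V2 := hn12 k0 hk0
  have hks1 : k0 ≠ s1 := fun h => hs1n1 (h ▸ hk0)
  have hks2 : k0 ≠ s2 := fun h => hs2n1 (h ▸ hk0)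
  have hs1k : s1 ≠ k0 := hks1.symm
  have hs2k : s2 ≠ k0 := hks2.symm
  have hs21 : s2 ≠ s1 := hs12.symm
  intro x y
  by_cases hxy : x = y
  · subst hxy
    constructor
    · intro h; exact absurd rfl h.ne
    · intro h
      exfalso
      rcases h with ⟨rfl, _, h3⟩ | ⟨rfl, _, h3⟩ | ⟨rfl, h2⟩ | ⟨rfl, h2⟩ |
        ⟨h1, h2, _⟩ | ⟨h1, h2, _⟩ | ⟨rfl, h2, _⟩ | ⟨rfl, h2, _⟩ <;> simp_all
  have hyx : y ≠ x := fun h => hxy h.symm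
  have hcx := classify V1 V2 s1 s2 k0 hn12 hk0 hs1n1 hs1n2 hs2n1 hs2n2 x
  have hcy := classify V1 V2 s1 s2 k0 hn12 hk0 hs1n1 hs1n2 hs2n1 hs2n2 y
  rcases hcx with
    rfl | rfl | rfl | ⟨hx1, hx2, hxk, hkx, hxs1, hs1x, hxs2, hs2x⟩ |
    ⟨hx2, hx1, hxk, hkx, hxs1, hs1x, hxs2, hs2x⟩ | ⟨hx1, hx2, hxs1, hs1x, hxs2, hs2x, hxk, hkx⟩ <;>
  rcases hcy with
    rfl | rfl | rfl | ⟨hy1, hy2, hyk, hky, hys1, hs1y, hys2, hs2y⟩ |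
    ⟨hy2, hy1, hyk, hky, hys1, hs1y, hys2, hs2y⟩ | ⟨hy1, hy2, hys1, hs1y, hys2, hs2y, hyk, hky⟩ <;>
  simp_all [xMeas, localComp, deleteVert, hG] <;> tauto

lemma stepB {V : Type*}
    (V1 V2 : Set V) (s1 s2 : V) (E : V → V → Prop) (G1 : SimpleGraph V)
    (hn12 : ∀ z, z ∈ V1 → z ∉ V2)
    (hs1n1 : s1 ∉ V1) (hs1n2 : s1 ∉ V2) (hs2n1 : s2 ∉ V1) (hs2n2 : s2 ∉ V2)
    (hs12 : s1 ≠ s2)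
    (k0 : V) (hk0 : k0 ∈ V1)
    (hG1 : ∀ x y, G1.Adj x y ↔
      (x = k0 ∧ y ∈ V1 ∧ y ≠ k0) ∨ (y = k0 ∧ x ∈ V1 ∧ x ≠ k0) ∨
      (x = k0 ∧ y = s1) ∨ (y = k0 ∧ x = s1) ∨
      (x ∈ V1 ∧ y ∈ V2 ∧ ¬(E x y ↔ E k0 y)) ∨
      (y ∈ V1 ∧ x ∈ V2 ∧ ¬(E y x ↔ E k0 x)) ∨
      (x = s1 ∧ y ∈ V2 ∧ ¬ E k0 y) ∨ (y = s1 ∧ x ∈ V2 ∧ ¬ E k0 x)) :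
    ∀ x y, (xMeas G1 s1 k0).Adj x y ↔
      (x ∈ V1 ∧ y ∈ V2 ∧ ¬ E x y) ∨ (y ∈ V1 ∧ x ∈ V2 ∧ ¬ E y x) := by
  have hk2 : k0 ∉ V2 := hn12 k0 hk0
  have hks1 : k0 ≠ s1 := fun h => hs1n1 (h ▸ hk0)
  have hks2 : k0 ≠ s2 := fun h => hs2n1 (h ▸ hk0)
  have hs1k : s1 ≠ k0 := hks1.symm
  have hs2k : s2 ≠ k0 := hks2.symm
  have hs21 : s2 ≠ s1 := hs12.symm
  intro x y
  by_cases hxy : x = y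
  · subst hxy
    constructor
    · intro h; exact absurd rfl h.ne
    · intro h
      exfalso
      rcases h with ⟨h1, h2, _⟩ | ⟨h1, h2, _⟩ <;> exact hn12 x h1 h2
  have hyx : y ≠ x := fun h => hxy h.symm
  have hcx := classify V1 V2 s1 s2 k0 hn12 hk0 hs1n1 hs1n2 hs2n1 hs2n2 x
  have hcy := classify V1 V2 s1 s2 k0 hn12 hk0 hs1n1 hs1n2 hs2n1 hs2n2 y
  rcases hcx with
    rfl | rfl | rfl | ⟨hx1, hx2, hxk, hkx, hxs1, hs1x, hxs2, hs2x⟩ |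
    ⟨hx2, hx1, hxk, hkx, hxs1, hs1x, hxs2, hs2x⟩ | ⟨hx1, hx2, hxs1, hs1x, hxs2, hs2x, hxk, hkx⟩ <;>
  rcases hcy with
    rfl | rfl | rfl | ⟨hy1, hy2, hyk, hky, hys1, hs1y, hys2, hs2y⟩ |
    ⟨hy2, hy1, hyk, hky, hys1, hs1y, hys2, hs2y⟩ | ⟨hy1, hy2, hys1, hs1y, hys2, hs2y, hyk, hky⟩ <;>
  simp_all [xMeas, localComp, deleteVert, hG1] <;> tauto

/-- Lemma 1 (Case I): in the Inter-QLAN with fully-connected super-nodes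
(`s₂` adjacent to all of `V₁` and to `s₁`; `s₁` adjacent to all of `V₂` and to
`s₂`; client adjacency given by `E ⊆ V₁ × V₂`), applying the X-measurement
pattern at `s₂` and then at `s₁`, both with special neighbor `k₀ ∈ V₁`, yields
the bipartite complement graph on `V₁ ∪ V₂`. -/
theorem xMeas_supernodes_yields_bipartite_complement {V : Type*}
    (V1 V2 : Set V) (s1 s2 : V) (E : V → V → Prop) (G : SimpleGraph V)
    (hdisj : Disjoint V1 V2)
    (hs1 : s1 ∉ V1 ∪ V2) (hs2 : s2 ∉ V1 ∪ V2) (hs12 : s1 ≠ s2)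
    (hG : ∀ x y, G.Adj x y ↔
      (x ∈ V1 ∧ y ∈ V2 ∧ E x y) ∨ (y ∈ V1 ∧ x ∈ V2 ∧ E y x) ∨
      (x = s2 ∧ y ∈ V1) ∨ (y = s2 ∧ x ∈ V1) ∨
      (x = s1 ∧ y ∈ V2) ∨ (y = s1 ∧ x ∈ V2) ∨
      (x = s1 ∧ y = s2) ∨ (x = s2 ∧ y = s1))
    (k0 : V) (hk0 : k0 ∈ V1) :
    ∀ x y, (xMeas (xMeas G s2 k0) s1 k0).Adj x y ↔
      (x ∈ V1 ∧ y ∈ V2 ∧ ¬ E x y) ∨ (y ∈ V1 ∧ x ∈ V2 ∧ ¬ E y x) := by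
  have hn12 : ∀ z, z ∈ V1 → z ∉ V2 := fun z h1 h2 => hdisj.ne_of_mem h1 h2 rfl
  have hA := stepA V1 V2 s1 s2 E G hn12 (fun h => hs1 (Or.inl h)) (fun h => hs1 (Or.inr h))
    (fun h => hs2 (Or.inl h)) (fun h => hs2 (Or.inr h)) hs12 hG k0 hk0
  exact stepB V1 V2 s1 s2 E (xMeas G s2 k0) hn12 (fun h => hs1 (Or.inl h))
    (fun h => hs1 (Or.inr h)) (fun h => hs2 (Or.inl h)) (fun h => hs2 (Or.inr h))
    hs12 k0 hk0 hA
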